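/- Over F_2, for all natural numbers m and r, F_{2^m · r}(x) = F_r(x)^{2^m} · x^{2^m - 1}. -/
import Mathlib


noncomputable def fibPoly (R : Type*) [CommRing R] : ℕ → Polynomial R
  | 0 => 0
  | 1 => 1
  | n + 2 => Polynomial.X * fibPoly R (n + 1) + fibPoly R n

lemma fibPoly_add (R : Type*) [CommRing R] (m n : ℕ) :
    fibPoly R (m + n + 1) =
      fibPoly R (m + 1) * fibPoly R (n + 1) + fibPoly R m * fibPoly R n := by
  induction n using Nat.strong_induction_on generalizing m with
  | _ n ih =>
    match n with
    | 0 => simp [fibPoly]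
    | 1 =>
      show fibPoly R (m + 2) = _
      simp [fibPoly]; ring
    | n + 2 =>
      have h1 := ih (n + 1) (by omega) m
      have h0 := ih n (by omega) m
      have : m + (n + 2) + 1 = (m + n + 1) + 2 := by omega
      rw [this]
      show Polynomial.X * fibPoly R (m + n + 1 + 1) + fibPoly R (m + n + 1) = _
      have e : m + n + 1 + 1 = m + (n + 1) + 1 := by omega
      rw [e, h1, h0]
      show _ = fibPoly R (m+1) * (Polynomial.X * fibPoly R (n+2) + fibPoly R (n+1))
        + fibPoly R m * (Polynomial.X * fibPoly R (n+1) + fibPoly R n)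
      ring

lemma fibPoly_two_mul (r : ℕ) :
    fibPoly (ZMod 2) (2 * r) = Polynomial.X * (fibPoly (ZMod 2) r) ^ 2 := by
  match r with
  | 0 => simp [fibPoly]
  | s + 1 =>
    have : 2 * (s + 1) = s + (s + 1) + 1 := by omega
    rw [this, fibPoly_add]
    show fibPoly (ZMod 2) (s+1) * (Polynomial.X * fibPoly (ZMod 2) (s+1) + fibPoly (ZMod 2) s) + _ = _
    have h2 : (2 : Polynomial (ZMod 2)) = 0 := by
      exact CharTwo.two_eq_zero
    ring_nf
    rw [h2]
    ring

theorem fibPoly_two_pow_mul (m r : ℕ) :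
    fibPoly (ZMod 2) (2 ^ m * r) =
      (fibPoly (ZMod 2) r) ^ (2 ^ m) * Polynomial.X ^ (2 ^ m - 1) := by
  induction m with
  | zero => simp
  | succ m ih =>
    have h : 2 ^ (m + 1) * r = 2 * (2 ^ m * r) := by ring
    rw [h, fibPoly_two_mul, ih]
    have hpos : 1 ≤ 2 ^ m := Nat.one_le_two_pow
    have e1 : 2 ^ (m + 1) = 2 ^ m * 2 := by ring
    have e2 : 2 ^ (m + 1) - 1 = (2 ^ m - 1) * 2 + 1 := by omega
    rw [e2, e1, pow_mul, pow_add, pow_mul, pow_one]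
    ring
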